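/- Let k be a positive integer, α ∈ (0,1], let (a,b) ⊆ [c,d] ⊆ ℝ be an open and a closed bounded interval, f : (a,b) → ℝ continuous, and g ∈ C^k([c,d]). Assume: (i) |f(x)|^{k+α} = |g(x)| for every x ∈ (a,b); (ii) g(x)·g'(x) ≠ 0 for every x ∈ (a,b); (iii) g^{(k)} is α-Hölder continuous on [c,d]; (iv) for every h = 1, …, k there exists x_h ∈ [c,d] with g^{(h)}(x_h) = 0. Let p be defined by 1/p + 1/(k+α) = 1. Then there exists a constant C₂(k), depending only on k, such that ‖f'‖_{p,w,(a,b)} ≤ C₂(k) · [Höld_α(g^{(k)}, (c,d))]^{1/(k+α)} · (d-c)^{1/p}. -/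

import Mathlib

set_option maxHeartbeats 1000000

open MeasureTheory Set
open scoped ENNReal NNReal

/-- The weak `L^p` quasinorm of `ψ` over `Ω ⊆ ℝ`:
`sup_{M ≥ 0} M · (meas {x ∈ Ω : |ψ(x)| > M})^(1/p)`. -/
noncomputable def weakLpNorm (p : ℝ) (Ω : Set ℝ) (ψ : ℝ → ℝ) : ℝ≥0∞ :=
  ⨆ M : ℝ≥0, (M : ℝ≥0∞) * (volume {x | x ∈ Ω ∧ (M : ℝ) < |ψ x|}) ^ (1 / p)

/-- A continuous nowhere-zero function on an interval has constant sign. -/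
lemma exists_sign_mul_eq_abs {u : ℝ → ℝ} {a b : ℝ} (hab : a < b)
    (hu : ContinuousOn u (Set.Ioo a b)) (h0 : ∀ x ∈ Set.Ioo a b, u x ≠ 0) :
    ∃ s : ℝ, |s| = 1 ∧ ∀ x ∈ Set.Ioo a b, s * u x = |u x| := by
  have hx₀ : (a + b) / 2 ∈ Set.Ioo a b := by constructor <;> nlinarith
  have key : ∀ x ∈ Set.Ioo a b, ∀ y ∈ Set.Ioo a b, u x < 0 → 0 < u y → False := by
    intro x hx y hy hux huy
    have hsub : Set.uIcc x y ⊆ Set.Ioo a b := Set.OrdConnected.uIcc_subset Set.ordConnected_Ioo hx hy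
    have : (0 : ℝ) ∈ Set.uIcc (u x) (u y) := Set.mem_uIcc.mpr (Or.inl ⟨hux.le, huy.le⟩)
    obtain ⟨z, hz, hz0⟩ := intermediate_value_uIcc (hu.mono hsub) this
    exact h0 z (hsub hz) hz0
  rcases lt_or_gt_of_ne (h0 _ hx₀) with hneg | hpos
  · refine ⟨-1, by norm_num, fun x hx => ?_⟩
    have : u x < 0 := by
      rcases lt_or_gt_of_ne (h0 x hx) with h | h
      · exact h
      · exact absurd (key _ hx₀ x hx hneg h) (by simp)
    rw [abs_of_neg this]; ring
  · refine ⟨1, by norm_num, fun x hx => ?_⟩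
    have : 0 < u x := by
      rcases lt_or_gt_of_ne (h0 x hx) with h | h
      · exact absurd (key x hx _ hx₀ h hpos) (by simp)
      · exact h
    rw [abs_of_pos this]; ring

lemma deriv_chain_bound (k : ℕ) (hk : 0 < k) (α c d H : ℝ) (hα : 0 < α) (hcd : c < d)
    (g : ℝ → ℝ) (hg : ContDiffOn ℝ (k : ℕ∞) g (Icc c d)) (hH : 0 ≤ H)
    (hHo : ∀ x ∈ Icc c d, ∀ y ∈ Icc c d,
      |iteratedDerivWithin k g (Icc c d) y - iteratedDerivWithin k g (Icc c d) x|
        ≤ H * |y - x| ^ α)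
    (hvan : ∀ h : ℕ, 1 ≤ h → h ≤ k → ∃ x ∈ Icc c d, iteratedDerivWithin h g (Icc c d) x = 0) :
    ∀ x ∈ Icc c d, |derivWithin g (Icc c d) x| ≤ H * (d - c) ^ ((k : ℝ) - 1 + α) := by
  have hL : (0:ℝ) < d - c := by linarith
  have hud : UniqueDiffOn ℝ (Icc c d) := uniqueDiffOn_Icc hcd
  have habs : ∀ x ∈ Icc c d, ∀ y ∈ Icc c d, |y - x| ≤ d - c := by
    intro x hx y hy
    rw [abs_sub_le_iff]
    constructor <;> [linarith [hx.1, hx.2, hy.1, hy.2]; linarith [hx.1, hx.2, hy.1, hy.2]]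
  -- main induction
  have main : ∀ j : ℕ, j < k → ∀ x ∈ Icc c d,
      |iteratedDerivWithin (k - j) g (Icc c d) x| ≤ H * (d - c) ^ ((j : ℝ) + α) := by
    intro j
    induction j with
    | zero =>
      intro _ x hx
      obtain ⟨xk, hxk, hxk0⟩ := hvan k hk le_rfl
      have := hHo xk hxk x hx
      rw [hxk0, sub_zero] at this
      simp only [Nat.sub_zero, Nat.cast_zero, zero_add]
      refine this.trans (mul_le_mul_of_nonneg_left ?_ hH)
      exact Real.rpow_le_rpow (abs_nonneg _) (habs _ hxk _ hx) hα.le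
    | succ j ih =>
      intro hjk x hx
      have hj : j < k := by omega
      have h1 : 1 ≤ k - (j+1) := by omega
      obtain ⟨xh, hxh, hxh0⟩ := hvan (k - (j+1)) h1 (by omega)
      have hdiff : DifferentiableOn ℝ (iteratedDerivWithin (k - (j+1)) g (Icc c d)) (Icc c d) :=
        hg.differentiableOn_iteratedDerivWithin (by exact_mod_cast Nat.cast_lt.mpr (by omega)) hud
      have hbound : ∀ y ∈ Icc c d,
          ‖derivWithin (iteratedDerivWithin (k - (j+1)) g (Icc c d)) (Icc c d) y‖
            ≤ H * (d - c) ^ ((j : ℝ) + α) := by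
        intro y hy
        have hsucc : derivWithin (iteratedDerivWithin (k - (j+1)) g (Icc c d)) (Icc c d) y
            = iteratedDerivWithin (k - j) g (Icc c d) y := by
          have : k - j = (k - (j+1)) + 1 := by omega
          rw [this, iteratedDerivWithin_succ]
        rw [hsucc]
        exact ih hj y hy
      have := (convex_Icc c d).norm_image_sub_le_of_norm_derivWithin_le hdiff hbound hxh hx
      rw [hxh0, sub_zero] at this
      calc |iteratedDerivWithin (k - (j+1)) g (Icc c d) x|
          ≤ H * (d - c) ^ ((j : ℝ) + α) * ‖x - xh‖ := this
        _ ≤ H * (d - c) ^ ((j : ℝ) + α) * (d - c) := by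
            refine mul_le_mul_of_nonneg_left ?_ (by positivity)
            exact habs _ hxh _ hx
        _ = H * (d - c) ^ (((j:ℕ)+1 : ℝ) + α) := by
            rw [mul_assoc]
            congr 1
            rw [show ((j:ℕ):ℝ) + 1 + α = ((j:ℝ) + α) + 1 by ring,
              Real.rpow_add hL ((j:ℝ)+α) 1, Real.rpow_one]
        _ = H * (d - c) ^ (((j+1 : ℕ) : ℝ) + α) := by push_cast; ring_nf
  intro x hx
  have := main (k - 1) (by omega) x hx
  have hk1 : k - (k - 1) = 1 := by omega
  rw [hk1, iteratedDerivWithin_one] at this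
  convert this using 3
  push_cast [Nat.cast_sub hk]
  ring

/-- **Weak `L^p` estimate on an expanded interval.** -/
theorem weak_lp_estimate_expanded_interval (k : ℕ) (hk : 0 < k) :
    ∃ C₂ : ℝ, ∀ α : ℝ, α ∈ Set.Ioc (0 : ℝ) 1 → ∀ a b c d : ℝ, a < b → c < d →
      Ioo a b ⊆ Icc c d →
      ∀ f g : ℝ → ℝ,
      ContinuousOn f (Ioo a b) →
      ContDiffOn ℝ (k : ℕ∞) g (Icc c d) →
      (∀ x ∈ Ioo a b, |f x| ^ ((k : ℝ) + α) = |g x|) →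
      (∀ x ∈ Ioo a b, g x * derivWithin g (Icc c d) x ≠ 0) →
      ∀ H : ℝ, 0 ≤ H →
      (∀ x ∈ Icc c d, ∀ y ∈ Icc c d,
        |iteratedDerivWithin k g (Icc c d) y - iteratedDerivWithin k g (Icc c d) x|
          ≤ H * |y - x| ^ α) →
      (∀ h : ℕ, 1 ≤ h → h ≤ k → ∃ x ∈ Icc c d, iteratedDerivWithin h g (Icc c d) x = 0) →
      ∀ p : ℝ, 1 / p + 1 / ((k : ℝ) + α) = 1 →
      weakLpNorm p (Ioo a b) (deriv f) ≤
        ENNReal.ofReal (C₂ * H ^ (1 / ((k : ℝ) + α)) * (d - c) ^ (1 / p)) := by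
  refine ⟨2, ?_⟩
  intro α hα a b c d hab hcd hsub f g hf hg hfg hgg' H hH hHo hvan p hp
  -- basic positivity facts
  have hk1 : (1:ℝ) ≤ (k:ℝ) := by exact_mod_cast hk
  set β : ℝ := 1 / ((k : ℝ) + α) with hβdef
  have hκ : (1:ℝ) < (k:ℝ) + α := by have := hα.1; linarith
  have hκ0 : (0:ℝ) < (k:ℝ) + α := by linarith
  have hβ0 : 0 < β := by positivity
  have hβ1 : β < 1 := by
    rw [hβdef, div_lt_one hκ0]; linarith
  have h1p : 1 / p = 1 - β := by linarith
  have hL : (0:ℝ) < d - c := by linarith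
  -- the open interval is inside the open interval (c,d)
  have hca : c ≤ a := by
    by_contra hcon
    push_neg at hcon
    have ht : (a + min b c) / 2 ∈ Ioo a b := by
      constructor
      · have : a < min b c := lt_min hab hcon
        linarith
      · have h1 : min b c ≤ b := min_le_left _ _
        have : a < b := hab
        have : (a + min b c)/2 < min b c := by
          have : a < min b c := lt_min hab hcon
          linarith
        linarith [min_le_left b c]
    have := (hsub ht).1
    have h2 : (a + min b c) / 2 < c := by
      have h3 : min b c ≤ c := min_le_right _ _
      have : a < c := hcon
      nlinarith [lt_min hab hcon]
    linarith
  have hbd : b ≤ d := by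
    by_contra hcon
    push_neg at hcon
    have ht : (max a d + b) / 2 ∈ Ioo a b := by
      constructor
      · have : max a d < b := max_lt hab hcon
        linarith [le_max_left a d]
      · have : max a d < b := max_lt hab hcon
        linarith
    have := (hsub ht).2
    have : d < (max a d + b) / 2 := by
      have : max a d < b := max_lt hab hcon
      nlinarith [le_max_right a d]
    linarith
  have hIoo : Ioo a b ⊆ Ioo c d := fun x hx => ⟨lt_of_le_of_lt hca hx.1, lt_of_lt_of_le hx.2 hbd⟩
  have hnhds : ∀ x ∈ Ioo a b, Icc c d ∈ nhds x := by
    intro x hx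
    exact Icc_mem_nhds (hIoo hx).1 (hIoo hx).2
  have hud : UniqueDiffOn ℝ (Icc c d) := uniqueDiffOn_Icc hcd
  -- derivWithin = deriv on Ioo a b
  have hdeq : ∀ x ∈ Ioo a b, derivWithin g (Icc c d) x = deriv g x := fun x hx =>
    derivWithin_of_mem_nhds (hnhds x hx)
  have hgd : ∀ x ∈ Ioo a b, DifferentiableAt ℝ g x := by
    intro x hx
    have : DifferentiableOn ℝ g (Icc c d) := hg.differentiableOn (by simp [hk.ne'])
    exact (this x (hsub hx)).differentiableAt (hnhds x hx)
  have hg0 : ∀ x ∈ Ioo a b, g x ≠ 0 := fun x hx => fun h => hgg' x hx (by rw [h]; ring)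
  have hg'0 : ∀ x ∈ Ioo a b, deriv g x ≠ 0 := by
    intro x hx h
    exact hgg' x hx (by rw [hdeq x hx, h]; ring)
  have hgc : ContinuousOn g (Ioo a b) := hg.continuousOn.mono hsub
  have hg'c : ContinuousOn (deriv g) (Ioo a b) := by
    have h1 : ContinuousOn (derivWithin g (Icc c d)) (Icc c d) :=
      hg.continuousOn_derivWithin hud (by exact_mod_cast hk)
    exact (h1.mono hsub).congr fun x hx => (hdeq x hx).symm
  have hf0 : ∀ x ∈ Ioo a b, f x ≠ 0 := by
    intro x hx h
    have := hfg x hx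
    rw [h] at this
    simp only [abs_zero] at this
    rw [Real.zero_rpow (by positivity)] at this
    exact hg0 x hx (by rwa [eq_comm, abs_eq_zero] at this)
  -- sign constants
  obtain ⟨s₁, hs₁abs, hs₁⟩ := exists_sign_mul_eq_abs hab hgc hg0
  obtain ⟨s₂, hs₂abs, hs₂⟩ := exists_sign_mul_eq_abs hab hg'c hg'0
  obtain ⟨ε, hεabs, hε⟩ := exists_sign_mul_eq_abs hab hf hf0
  have hs₁2 : s₁ * s₁ = 1 := by rw [← abs_mul_self s₁, abs_mul, hs₁abs]; norm_num
  have hs₂2 : s₂ * s₂ = 1 := by rw [← abs_mul_self s₂, abs_mul, hs₂abs]; norm_num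
  have hε2 : ε * ε = 1 := by rw [← abs_mul_self ε, abs_mul, hεabs]; norm_num
  set η : ℝ := ε * s₁ * s₂ with hηdef
  have hη2 : η * η = 1 := by
    have h : η * η = (ε * ε) * ((s₁ * s₁) * (s₂ * s₂)) := by rw [hηdef]; ring
    rw [h, hε2, hs₁2, hs₂2]; norm_num
  -- |f| = |g| ^ β on Ioo a b
  have habsf : ∀ x ∈ Ioo a b, |f x| = |g x| ^ β := by
    intro x hx
    rw [← hfg x hx, ← Real.rpow_mul (abs_nonneg (f x)), mul_one_div, div_self hκ0.ne',
      Real.rpow_one]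
  -- f agrees with an explicit rpow formula near each point
  have hFf : ∀ x ∈ Ioo a b, f x = ε * (s₁ * g x) ^ β := by
    intro x hx
    have h1 : f x = ε * |f x| := by
      calc f x = (ε * ε) * f x := by rw [hε2]; ring
        _ = ε * (ε * f x) := by ring
        _ = ε * |f x| := by rw [hε x hx]
    rw [h1, habsf x hx, hs₁ x hx]
  have hkey : ∀ x ∈ Ioo a b, HasDerivAt f
      (ε * ((s₁ * deriv g x) * β * (s₁ * g x) ^ (β - 1))) x := by
    intro x hx
    have hgx : s₁ * g x ≠ 0 := by rw [hs₁ x hx]; simpa using hg0 x hx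
    have h1 : HasDerivAt (fun t => s₁ * g t) (s₁ * deriv g x) x :=
      ((hgd x hx).hasDerivAt).const_mul s₁
    have h2 : HasDerivAt (fun t => (s₁ * g t) ^ β)
        ((s₁ * deriv g x) * β * (s₁ * g x) ^ (β - 1)) x :=
      h1.rpow_const (Or.inl hgx)
    have h3 := h2.const_mul ε
    refine h3.congr_of_eventuallyEq ?_
    filter_upwards [Ioo_mem_nhds hx.1 hx.2] with t ht
    exact hFf t ht
  have hfd : ∀ x ∈ Ioo a b, DifferentiableAt ℝ f x := fun x hx =>
    (hkey x hx).differentiableAt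
  have hdf : ∀ x ∈ Ioo a b, η * deriv f x = β * |g x| ^ (β - 1) * |deriv g x| := by
    intro x hx
    rw [(hkey x hx).deriv, hs₁ x hx]
    set D := |deriv g x| with hD
    have h4 : deriv g x = s₂ * D := by
      calc deriv g x = (s₂ * s₂) * deriv g x := by rw [hs₂2]; ring
        _ = s₂ * (s₂ * deriv g x) := by ring
        _ = s₂ * D := by rw [hs₂ x hx]
    rw [h4, hηdef]
    have h5 : ε * s₁ * s₂ * (ε * (s₁ * (s₂ * D) * β * |g x| ^ (β - 1)))
        = (ε * ε) * ((s₁ * s₁) * ((s₂ * s₂) * (β * |g x| ^ (β - 1) * D))) := by ring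
    rw [h5, hε2, hs₁2, hs₂2]; ring
  -- continuity of deriv f on Ioo a b
  have hdfc : ContinuousOn (deriv f) (Ioo a b) := by
    have hform : ∀ x ∈ Ioo a b, deriv f x = η * (β * |g x| ^ (β - 1) * |deriv g x|) := by
      intro x hx
      calc deriv f x = (η * η) * deriv f x := by rw [hη2]; ring
        _ = η * (η * deriv f x) := by ring
        _ = η * (β * |g x| ^ (β - 1) * |deriv g x|) := by rw [hdf x hx]
    have hc : ContinuousOn (fun x => η * (β * |g x| ^ (β - 1) * |deriv g x|)) (Ioo a b) := by
      refine continuousOn_const.mul (ContinuousOn.mul (continuousOn_const.mul ?_) hg'c.abs)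
      exact ContinuousOn.rpow_const hgc.abs (fun x hx => Or.inl (by simpa using hg0 x hx))
    exact hc.congr hform
  -- global bound on |deriv g|
  set G : ℝ := H * (d - c) ^ ((k : ℝ) - 1 + α) with hGdef
  have hGb : ∀ x ∈ Ioo a b, |deriv g x| ≤ G := by
    intro x hx
    rw [← hdeq x hx]
    exact deriv_chain_bound k hk α c d H hα.1 hcd g hg hH hHo hvan x (hsub hx)
  have hx₀ : (a + b) / 2 ∈ Ioo a b := by constructor <;> nlinarith
  have hGpos : 0 < G :=
    lt_of_lt_of_le (abs_pos.mpr (hg'0 _ hx₀)) (hGb _ hx₀)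
  have hHpos : 0 < H := by
    by_contra hcon
    push_neg at hcon
    have : H = 0 := le_antisymm hcon hH
    rw [hGdef, this, zero_mul] at hGpos
    exact lt_irrefl 0 hGpos
  -- now bound the weak Lp norm
  rw [weakLpNorm]
  refine iSup_le fun M => ?_
  rcases eq_or_ne M 0 with hM0 | hM0
  · simp [hM0]
  have hMr : (0:ℝ) < (M:ℝ) := by positivity
  set Mr : ℝ := (M:ℝ) with hMrdef
  set A : Set ℝ := {x | x ∈ Ioo a b ∧ Mr < |deriv f x|} with hAdef
  have hAmeas : MeasurableSet A := by
    have : A = Ioo a b ∩ {x | Mr < |deriv f x|} := rfl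
    rw [this]
    exact measurableSet_Ioo.inter (measurableSet_lt measurable_const (measurable_deriv f).abs)
  set δ : ℝ := (β * G / Mr) ^ (1 / (1 - β)) with hδdef
  have hδpos : 0 < δ := by
    apply Real.rpow_pos_of_pos
    positivity
  -- points of A have small |g| and small |f|
  have hAg : ∀ x ∈ A, |g x| < δ := by
    rintro x ⟨hx, hMx⟩
    have hgx : 0 < |g x| := abs_pos.mpr (hg0 x hx)
    have h1 : Mr < β * |g x| ^ (β - 1) * |deriv g x| := by
      calc Mr < |deriv f x| := hMx
        _ = |η * deriv f x| := by rw [abs_mul, hηdef, abs_mul, abs_mul, hεabs, hs₁abs, hs₂abs]; ring_nf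
        _ = β * |g x| ^ (β - 1) * |deriv g x| := by
            rw [hdf x hx, abs_of_nonneg]
            positivity
    have h2 : Mr < β * G * |g x| ^ (β - 1) := by
      calc Mr < β * |g x| ^ (β - 1) * |deriv g x| := h1
        _ ≤ β * |g x| ^ (β - 1) * G := by
            refine mul_le_mul_of_nonneg_left (hGb x hx) (by positivity)
        _ = β * G * |g x| ^ (β - 1) := by ring
    have h3 : |g x| ^ (1 - β) < β * G / Mr := by
      have hrw : |g x| ^ (β - 1) = (|g x| ^ (1 - β))⁻¹ := by
        rw [← Real.rpow_neg hgx.le]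
        norm_num
      rw [hrw] at h2
      have hpow : 0 < |g x| ^ (1 - β) := Real.rpow_pos_of_pos hgx (1 - β)
      rw [lt_div_iff₀ hMr]
      calc |g x| ^ (1 - β) * Mr < |g x| ^ (1 - β) * (β * G * (|g x| ^ (1 - β))⁻¹) := by
            exact mul_lt_mul_of_pos_left h2 hpow
        _ = β * G := by field_simp
    calc |g x| = (|g x| ^ (1 - β)) ^ (1 / (1 - β)) := by
          rw [← Real.rpow_mul (abs_nonneg _), mul_one_div, div_self (ne_of_gt (by linarith : (0:ℝ) < 1 - β)),
            Real.rpow_one]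
      _ < δ := by
          rw [hδdef]
          refine Real.rpow_lt_rpow (Real.rpow_nonneg (abs_nonneg _) _) h3 ?_
          have h9 : (0:ℝ) < 1 - β := by linarith
          positivity
  have hAf : ∀ x ∈ A, |f x| ≤ δ ^ β := fun x hx =>
    (habsf x hx.1) ▸ Real.rpow_le_rpow (abs_nonneg _) (hAg x hx).le hβ0.le
  have hAsub : A ⊆ Ioo a b := fun x hx => hx.1
  have hAfin : volume A ≠ ⊤ := by
    refine ne_top_of_le_ne_top ?_ (measure_mono hAsub)
    simp [Real.volume_Ioo]
  -- the key measure estimate for a compact piece between two points of A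
  have hseg : ∀ x ∈ A, ∀ y ∈ A, x ≤ y → volume (A ∩ Icc x y) ≤ ENNReal.ofReal (2 * δ ^ β / Mr) := by
    intro x hxA y hyA hxy
    have hIccIoo : Icc x y ⊆ Ioo a b := Set.ordConnected_Ioo.out (hAsub hxA) (hAsub hyA)
    have huIcc : uIcc x y ⊆ Ioo a b := by rw [Set.uIcc_of_le hxy]; exact hIccIoo
    have hScont : ContinuousOn (fun t => |deriv f t|) (Icc x y) := (hdfc.mono hIccIoo).abs
    have hint : IntegrableOn (fun t => |deriv f t|) (Icc x y) volume :=
      hScont.integrableOn_Icc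
    have hSmeas : MeasurableSet (A ∩ Icc x y) := hAmeas.inter measurableSet_Icc
    have hSfin : volume (A ∩ Icc x y) ≠ ⊤ :=
      ne_top_of_le_ne_top (by simp [Real.volume_Icc] : volume (Icc x y) ≠ ⊤)
        (measure_mono inter_subset_right)
    have hcheb : Mr * (volume (A ∩ Icc x y)).toReal ≤ ∫ t in A ∩ Icc x y, |deriv f t| := by
      have := setIntegral_ge_of_const_le hSmeas hSfin (fun t ht => (ht.1.2).le)
        (hint.mono_set inter_subset_right)
      rw [smul_eq_mul, mul_comm] at this; exact this
    have hmono : ∫ t in A ∩ Icc x y, |deriv f t| ≤ ∫ t in Icc x y, |deriv f t| := by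
      refine setIntegral_mono_set hint ?_ (Filter.Eventually.of_forall fun t => ?_)
      · exact Filter.Eventually.of_forall fun t => abs_nonneg _
      · exact fun ht => ht.2
    have hftc : ∫ t in Icc x y, |deriv f t| ≤ 2 * δ ^ β := by
      have h1 : ∫ t in Icc x y, |deriv f t| = ∫ t in x..y, |deriv f t| := by
        rw [intervalIntegral.integral_of_le hxy, integral_Icc_eq_integral_Ioc]
      have h2 : ∫ t in x..y, |deriv f t| = η * ∫ t in x..y, deriv f t := by
        rw [← intervalIntegral.integral_const_mul]
        refine intervalIntegral.integral_congr fun t ht => ?_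
        have htI := huIcc ht
        calc |deriv f t| = |η * deriv f t| := by
              rw [abs_mul, hηdef, abs_mul, abs_mul, hεabs, hs₁abs, hs₂abs]; ring_nf
          _ = η * deriv f t := by
              rw [hdf t htI, abs_of_nonneg]
              positivity
      have h3 : ∫ t in x..y, deriv f t = f y - f x := by
        refine intervalIntegral.integral_deriv_eq_sub (fun t ht => hfd t (huIcc ht)) ?_
        exact (hdfc.mono huIcc).intervalIntegrable
      rw [h1, h2, h3]
      have h4 : η * (f y - f x) ≤ |η * (f y - f x)| := le_abs_self _
      have h5 : |η * (f y - f x)| = |f y - f x| := by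
        rw [abs_mul, hηdef, abs_mul, abs_mul, hεabs, hs₁abs, hs₂abs]; ring_nf
      have h6 : |f y - f x| ≤ |f y| + |f x| := abs_sub _ _
      have h7 := hAf x hxA
      have h8 := hAf y hyA
      linarith
    have hreal : (volume (A ∩ Icc x y)).toReal ≤ 2 * δ ^ β / Mr := by
      rw [le_div_iff₀ hMr]
      linarith [hcheb.trans (hmono.trans hftc)]
    rw [← ENNReal.ofReal_toReal hSfin]
    exact ENNReal.ofReal_le_ofReal hreal
  -- inner regularity upgrades the segment estimate to all of A
  have hvolA : volume A ≤ ENNReal.ofReal (2 * δ ^ β / Mr) := by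
    refine ENNReal.le_of_forall_pos_le_add fun ε' hε' _ => ?_
    obtain ⟨K, hKA, hKc, hKlt⟩ := hAmeas.exists_isCompact_lt_add hAfin
      (by exact_mod_cast hε'.ne' : (ε' : ℝ≥0∞) ≠ 0)
    refine le_trans hKlt.le (add_le_add_left ?_ _)
    rcases K.eq_empty_or_nonempty with hKe | hKne
    · simp [hKe]
    have hxK : sInf K ∈ K := hKc.sInf_mem hKne
    have hyK : sSup K ∈ K := hKc.sSup_mem hKne
    have hxy : sInf K ≤ sSup K := csInf_le_csSup hKne hKc.bddBelow hKc.bddAbove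
    have hKsub : K ⊆ A ∩ Icc (sInf K) (sSup K) := fun z hz =>
      ⟨hKA hz, csInf_le hKc.bddBelow hz, le_csSup hKc.bddAbove hz⟩
    exact le_trans (measure_mono hKsub) (hseg _ (hKA hxK) _ (hKA hyK) hxy)
  -- final real-number computation
  have h1mβ : (0:ℝ) < 1 - β := by linarith
  have hRpos : 0 < β * G / Mr := by positivity
  have eδ : δ ^ (β * (1 - β)) = (β * G / Mr) ^ β := by
    rw [hδdef, ← Real.rpow_mul hRpos.le]
    congr 1
    field_simp
  have e1 : (2 * δ ^ β / Mr) ^ (1 - β) = 2 ^ (1 - β) * δ ^ (β * (1 - β)) / Mr ^ (1 - β) := by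
    rw [Real.div_rpow (by positivity) hMr.le,
      Real.mul_rpow (by norm_num) (Real.rpow_nonneg hδpos.le β), ← Real.rpow_mul hδpos.le]
  have e2 : (β * G / Mr) ^ β = (β * G) ^ β / Mr ^ β := Real.div_rpow (mul_nonneg hβ0.le hGpos.le) hMr.le β
  have hMβ : Mr ^ β ≠ 0 := (Real.rpow_pos_of_pos hMr β).ne'
  have hM1β : Mr ^ (1 - β) ≠ 0 := (Real.rpow_pos_of_pos hMr (1 - β)).ne'
  have hM1 : Mr ^ β * Mr ^ (1 - β) = Mr := by
    rw [← Real.rpow_add hMr]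
    norm_num
  have e3 : Mr * (2 * δ ^ β / Mr) ^ (1 - β) = 2 ^ (1 - β) * (β * G) ^ β := by
    rw [e1, eδ, e2]
    field_simp
    linear_combination (-1 : ℝ) * hM1
  have e4 : G ^ β = H ^ β * (d - c) ^ (1 - β) := by
    rw [hGdef, Real.mul_rpow hH (Real.rpow_nonneg hL.le _), ← Real.rpow_mul hL.le]
    congr 1
    rw [hβdef]
    field_simp
    ring
  have b1 : (2:ℝ) ^ (1 - β) ≤ 2 := by
    calc (2:ℝ) ^ (1 - β) ≤ 2 ^ (1:ℝ) :=
          Real.rpow_le_rpow_of_exponent_le one_le_two (by linarith)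
      _ = 2 := Real.rpow_one 2
  have b2 : (β * G) ^ β ≤ G ^ β := by
    rw [Real.mul_rpow hβ0.le hGpos.le]
    have hββ : β ^ β ≤ 1 := Real.rpow_le_one hβ0.le hβ1.le hβ0.le
    nlinarith [Real.rpow_nonneg hGpos.le β, Real.rpow_nonneg hβ0.le β]
  have hfinal : Mr * (2 * δ ^ β / Mr) ^ (1 - β) ≤ 2 * H ^ β * (d - c) ^ (1 - β) := by
    rw [e3]
    calc 2 ^ (1 - β) * (β * G) ^ β ≤ 2 * G ^ β := by
          refine mul_le_mul b1 b2 (Real.rpow_nonneg (by positivity) β) (by norm_num)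
      _ = 2 * H ^ β * (d - c) ^ (1 - β) := by rw [e4]; ring
  -- wrap up in ℝ≥0∞
  rw [h1p]
  calc (M : ℝ≥0∞) * volume A ^ (1 - β)
      ≤ ENNReal.ofReal Mr * ENNReal.ofReal ((2 * δ ^ β / Mr) ^ (1 - β)) := by
        rw [ENNReal.ofReal_coe_nnreal]
        refine mul_le_mul' le_rfl ?_
        calc volume A ^ (1 - β) ≤ (ENNReal.ofReal (2 * δ ^ β / Mr)) ^ (1 - β) :=
              ENNReal.rpow_le_rpow hvolA h1mβ.le
          _ = ENNReal.ofReal ((2 * δ ^ β / Mr) ^ (1 - β)) :=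
              ENNReal.ofReal_rpow_of_pos (by positivity)
    _ = ENNReal.ofReal (Mr * (2 * δ ^ β / Mr) ^ (1 - β)) := by
        rw [← ENNReal.ofReal_mul hMr.le]
    _ ≤ ENNReal.ofReal (2 * H ^ β * (d - c) ^ (1 - β)) :=
        ENNReal.ofReal_le_ofReal hfinal
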